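/- For every L(1,2)-edge labeling f of G_v and every edge e in S_1, no edge of G_v other than e has label f(e); that is, the label of an edge incident to v is used exactly once in G_v. -/

import Mathlib

/-- The infinite triangular grid `T6`. -/
def T6 : SimpleGraph (ℤ × ℤ) where
  Adj u v := (v.1 - u.1, v.2 - u.2) ∈
    ({(1,0), (-1,0), (0,1), (0,-1), (1,1), (-1,-1)} : Set (ℤ × ℤ))
  symm := by
    constructor
    rintro ⟨a, b⟩ ⟨c, d⟩ h
    simp only [Set.mem_insert_iff, Set.mem_singleton_iff, Prod.mk.injEq] at h ⊢
    omega
  loopless := by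
    constructor
    rintro ⟨a, b⟩ h
    simp only [Set.mem_insert_iff, Set.mem_singleton_iff, Prod.mk.injEq, sub_self] at h
    omega

/-- `f` is an L(1,2)-edge labeling of `G`. -/
def IsL12 {V : Type*} (G : SimpleGraph V) (f : Sym2 V → ℕ) : Prop :=
  (∀ e1 ∈ G.edgeSet, ∀ e2 ∈ G.edgeSet, e1 ≠ e2 → (∃ v, v ∈ e1 ∧ v ∈ e2) →
    f e1 ≠ f e2) ∧
  (∀ e1 ∈ G.edgeSet, ∀ e2 ∈ G.edgeSet, e1 ≠ e2 → ¬ (∃ v, v ∈ e1 ∧ v ∈ e2) →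
    (∃ e3 ∈ G.edgeSet, (∃ v, v ∈ e1 ∧ v ∈ e3) ∧ (∃ v, v ∈ e2 ∧ v ∈ e3)) →
    2 ≤ |(f e1 : ℤ) - (f e2 : ℤ)|)

/-- The subgraph `G_v` of `T6`: all edges with an endpoint adjacent to `v`. -/
def Gv (v : ℤ × ℤ) : SimpleGraph (ℤ × ℤ) where
  Adj u w := T6.Adj u w ∧ (T6.Adj v u ∨ T6.Adj v w)
  symm := ⟨fun u w h => ⟨T6.symm.symm _ _ h.1, h.2.symm⟩⟩
  loopless := ⟨fun u h => T6.loopless.irrefl u h.1⟩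

/-- `S_1`: the edges of `G_v` incident to `v`. -/
def S1 (v : ℤ × ℤ) : Set (Sym2 (ℤ × ℤ)) := {e | e ∈ (Gv v).edgeSet ∧ v ∈ e}

/-- `S_2`: the edges of `G_v` both of whose endpoints are adjacent to `v`. -/
def S2 (v : ℤ × ℤ) : Set (Sym2 (ℤ × ℤ)) := {e | e ∈ (Gv v).edgeSet ∧ ∀ u ∈ e, T6.Adj v u}

/-- `S_3`: the remaining edges of `G_v`. -/
def S3 (v : ℤ × ℤ) : Set (Sym2 (ℤ × ℤ)) := (Gv v).edgeSet \ (S1 v ∪ S2 v)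

/-- The label of an edge of `S_1` is used exactly once in `G_v`: no other edge of
`G_v` has the same label. -/
theorem S1_label_unique (v : ℤ × ℤ) (f : Sym2 (ℤ × ℤ) → ℕ) (hf : IsL12 (Gv v) f) :
    ∀ e ∈ S1 v, ∀ e' ∈ (Gv v).edgeSet, e' ≠ e → f e' ≠ f e := by
  rintro e ⟨heE, hev⟩ e' he'E hne hfe
  by_cases hsh : ∃ u, u ∈ e' ∧ u ∈ e
  · exact hf.1 e' he'E e heE hne hsh hfe
  · revert he'E hne hsh hfe
    induction e' using Sym2.ind with | _ b c =>
    intro he'E hne hfe hsh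
    rw [SimpleGraph.mem_edgeSet] at he'E
    have key : ∀ u, u ∈ (s(b, c)) → T6.Adj v u →
        2 ≤ |(f (s(b, c)) : ℤ) - (f e : ℤ)| := by
      intro u hu hvu
      have h3 : (Gv v).Adj v u := ⟨hvu, Or.inr hvu⟩
      exact hf.2 (s(b, c)) he'E e heE hne hsh
        ⟨s(v, u), h3, ⟨u, hu, Sym2.mem_mk_right v u⟩,
          ⟨v, hev, Sym2.mem_mk_left v u⟩⟩
    obtain ⟨hbc, hvb | hvc⟩ := he'E
    · have := key b (Sym2.mem_mk_left b c) hvb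
      simp [hfe] at this
    · have := key c (Sym2.mem_mk_right b c) hvc
      simp [hfe] at this
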